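/- Let γ > 1, let A, B: ℝ → (0,∞) be C¹ functions, let Ω ⊆ ℝ² be open, and let ψ ∈ C²(Ω) solve Σ_{i,j} a_{ij}(ψ,∇ψ) ψ_{x_i x_j} = F(ψ,∇ψ) on Ω, where at every point the Bernoulli relation ½|∇ψ|² = B(ψ)ρ² − A(ψ)ρ^{γ+1} has a solution ρ > 0 on the subsonic branch ρ^{γ−1} > 2B(ψ)/((γ+1)A(ψ)). Define m = (ψ_{x₂}, −ψ_{x₁}), ρ = ρ(½|∇ψ|², ψ) the subsonic-branch density, and p = ((γ−1)/γ) A(ψ) ρ^γ. Then (m, p, ρ) is a solution of the steady full Euler equations on Ω, and it is subsonic: |m/ρ|² < γp/ρ everywhere. -/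

import Mathlib

open Set Filter Topology
open scoped ENNReal NNReal

noncomputable section

abbrev E2 : Type := EuclideanSpace ℝ (Fin 2)

/-- The point `(a, b)` of the Euclidean plane. -/
def pt (a b : ℝ) : E2 := (WithLp.equiv 2 (Fin 2 → ℝ)).symm ![a, b]

/-- Partial derivative in the `i`-th coordinate direction. -/
def pd (i : Fin 2) (f : E2 → ℝ) : E2 → ℝ :=
  fun x => fderiv ℝ f x (EuclideanSpace.single i 1)

/-- Iterated mixed partial derivative `∂₁^{k₁} ∂₂^{k₂} f`. -/
def Dmix (k₁ k₂ : ℕ) (f : E2 → ℝ) : E2 → ℝ := (pd 0)^[k₁] ((pd 1)^[k₂] f)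

/-- The steady full Euler equations on `Ω`: conservation of mass, the two momentum
equations, and conservation of energy, with `E = |m|²/(2ρ²) + p/((γ-1)ρ)`. -/
def EulerEqs (γ : ℝ) (Ω : Set E2) (m₁ m₂ p ρ : E2 → ℝ) : Prop :=
  ∀ x ∈ Ω,
    pd 0 m₁ x + pd 1 m₂ x = 0 ∧
    pd 0 (fun y => m₁ y ^ 2 / ρ y) x + pd 1 (fun y => m₁ y * m₂ y / ρ y) x + pd 0 p x = 0 ∧
    pd 0 (fun y => m₁ y * m₂ y / ρ y) x + pd 1 (fun y => m₂ y ^ 2 / ρ y) x + pd 1 p x = 0 ∧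
    pd 0 (fun y => m₁ y *
        ((m₁ y ^ 2 + m₂ y ^ 2) / (2 * ρ y ^ 2) + p y / ((γ - 1) * ρ y) + p y / ρ y)) x +
      pd 1 (fun y => m₂ y *
        ((m₁ y ^ 2 + m₂ y ^ 2) / (2 * ρ y ^ 2) + p y / ((γ - 1) * ρ y) + p y / ρ y)) x = 0

/-- `ρ` is the subsonic-branch solution of the Bernoulli relation
`½|∇ψ|² = B(ψ)ρ² - A(ψ)ρ^{γ+1}` at the point `x`. -/
def BernoulliBranch (γ : ℝ) (A B : ℝ → ℝ) (ψ : E2 → ℝ) (ρ : ℝ) (x : E2) : Prop :=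
  0 < ρ ∧ 2 * B (ψ x) / ((γ + 1) * A (ψ x)) < ρ ^ (γ - 1) ∧
    (pd 0 ψ x ^ 2 + pd 1 ψ x ^ 2) / 2 = B (ψ x) * ρ ^ 2 - A (ψ x) * ρ ^ (γ + 1)

/-- The nondivergence-form reduced equation
`Σ_{i,j} a_{ij}(ψ,∇ψ) ψ_{x_i x_j} = F(ψ,∇ψ)` at the point `x`, with density value `ρ`. -/
def NonDivEq (γ : ℝ) (A B : ℝ → ℝ) (ψ : E2 → ℝ) (ρ : ℝ) (x : E2) : Prop :=
  ((γ - 1) * A (ψ x) * ρ ^ (γ + 1) - pd 1 ψ x ^ 2) * pd 0 (pd 0 ψ) x +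
      pd 0 ψ x * pd 1 ψ x * (pd 0 (pd 1 ψ) x + pd 1 (pd 0 ψ) x) +
      ((γ - 1) * A (ψ x) * ρ ^ (γ + 1) - pd 0 ψ x ^ 2) * pd 1 (pd 1 ψ) x =
    ((γ - 1) / γ) * ρ ^ (γ + 3) *
      (γ * A (ψ x) * deriv B (ψ x) - 2 * deriv A (ψ x) * B (ψ x) +
        A (ψ x) * deriv A (ψ x) * ρ ^ (γ - 1))

/-- The reduced elliptic equation for the stream function on `Ω`: at every point the
Bernoulli relation is solvable on the subsonic branch and, with that density,
the equation `a_{ij}(ψ,∇ψ) ψ_{x_i x_j} = F(ψ,∇ψ)` holds. -/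
def ReducedEq (γ : ℝ) (A B : ℝ → ℝ) (Ω : Set E2) (ψ : E2 → ℝ) : Prop :=
  ∀ x ∈ Ω, ∃ ρ : ℝ, BernoulliBranch γ A B ψ ρ x ∧ NonDivEq γ A B ψ ρ x

/-! ### Auxiliary calculus toolkit for `pd` -/

section Toolkit

variable {f g ψ : E2 → ℝ} {x : E2} {i j : Fin 2}

lemma pd_congr_nhds (h : f =ᶠ[nhds x] g) : pd i f x = pd i g x := by
  simp [pd, h.fderiv_eq]

lemma pd_const (c : ℝ) : pd i (fun _ => c) x = 0 := by
  simp [pd]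

lemma pd_add (hf : DifferentiableAt ℝ f x) (hg : DifferentiableAt ℝ g x) :
    pd i (fun y => f y + g y) x = pd i f x + pd i g x := by
  simp [pd, fderiv_fun_add hf hg]

lemma pd_neg : pd i (fun y => -f y) x = -pd i f x := by
  simp [pd, fderiv_neg]

lemma pd_sub (hf : DifferentiableAt ℝ f x) (hg : DifferentiableAt ℝ g x) :
    pd i (fun y => f y - g y) x = pd i f x - pd i g x := by
  simp [pd, fderiv_fun_sub hf hg]

lemma pd_mul (hf : DifferentiableAt ℝ f x) (hg : DifferentiableAt ℝ g x) :
    pd i (fun y => f y * g y) x = pd i f x * g x + f x * pd i g x := by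
  simp [pd, fderiv_fun_mul hf hg]; ring

lemma pd_const_mul (c : ℝ) (hf : DifferentiableAt ℝ f x) :
    pd i (fun y => c * f y) x = c * pd i f x := by
  simp [pd, fderiv_const_mul hf]

lemma pd_div_const (hf : DifferentiableAt ℝ f x) (c : ℝ) :
    pd i (fun y => f y / c) x = pd i f x / c := by
  have h : (fun y => f y / c) = fun y => c⁻¹ * f y := by
    funext y; rw [div_eq_inv_mul]
  rw [h, pd_const_mul _ hf, div_eq_inv_mul]

lemma pd_comp {h : ℝ → ℝ} (hh : DifferentiableAt ℝ h (f x)) (hf : DifferentiableAt ℝ f x) :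
    pd i (fun y => h (f y)) x = deriv h (f x) * pd i f x := by
  have h2 := (hh.hasDerivAt.comp_hasFDerivAt x hf.hasFDerivAt).fderiv
  rw [Function.comp_def] at h2
  simp only [pd, h2, ContinuousLinearMap.coe_smul', Pi.smul_apply, smul_eq_mul]

lemma pd_inv (hg : DifferentiableAt ℝ g x) (hgx : g x ≠ 0) :
    pd i (fun y => (g y)⁻¹) x = -(pd i g x / g x ^ 2) := by
  rw [pd_comp (differentiableAt_inv hgx) hg, deriv_inv]
  field_simp

lemma pd_div (hf : DifferentiableAt ℝ f x) (hg : DifferentiableAt ℝ g x) (hgx : g x ≠ 0) :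
    pd i (fun y => f y / g y) x = (pd i f x * g x - f x * pd i g x) / g x ^ 2 := by
  have : (fun y => f y / g y) = fun y => f y * (g y)⁻¹ := by
    funext y; rw [div_eq_mul_inv]
  rw [this, pd_mul (g := fun y => (g y)⁻¹) hf (hg.inv hgx), pd_inv hg hgx]
  field_simp; ring

lemma pd_sq (hf : DifferentiableAt ℝ f x) :
    pd i (fun y => f y ^ 2) x = 2 * f x * pd i f x := by
  have : (fun y => f y ^ 2) = fun y => f y * f y := by funext y; ring
  rw [this, pd_mul hf hf]; ring

lemma pd_rpow (c : ℝ) (hf : DifferentiableAt ℝ f x) (hpos : 0 < f x) :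
    pd i (fun y => f y ^ c) x = c * f x ^ (c - 1) * pd i f x := by
  rw [pd_comp ((Real.hasDerivAt_rpow_const (p := c) (Or.inl hpos.ne')).differentiableAt) hf,
    Real.deriv_rpow_const (f x) c]

lemma pd_contDiffAt (h : ContDiffAt ℝ 2 ψ x) : ContDiffAt ℝ 1 (pd i ψ) x := by
  have h1 : ContDiffAt ℝ 1 (fderiv ℝ ψ) x := h.fderiv_right (le_refl _)
  exact (ContinuousLinearMap.apply ℝ ℝ (EuclideanSpace.single i 1)).contDiff.contDiffAt.comp x h1

lemma pd_symm (h : ContDiffAt ℝ 2 ψ x) : pd 0 (pd 1 ψ) x = pd 1 (pd 0 ψ) x := by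
  have hs := h.isSymmSndFDerivAt (by simp)
  have hd : DifferentiableAt ℝ (fderiv ℝ ψ) x :=
    (h.fderiv_right (le_refl _)).differentiableAt one_ne_zero
  have key : ∀ i j : Fin 2, pd i (pd j ψ) x =
      fderiv ℝ (fderiv ℝ ψ) x (EuclideanSpace.single i 1) (EuclideanSpace.single j 1) := by
    intro i j
    have hc := ((ContinuousLinearMap.apply ℝ ℝ
      (EuclideanSpace.single j 1)).hasFDerivAt.comp x hd.hasFDerivAt).fderiv
    rw [Function.comp_def] at hc
    simp only [ContinuousLinearMap.apply_apply] at hc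
    show (fderiv ℝ (fun y => fderiv ℝ ψ y (EuclideanSpace.single j 1)) x)
      (EuclideanSpace.single i 1) = _
    rw [hc]; rfl
  rw [key 0 1, key 1 0, hs]

end Toolkit

lemma rpow_add_nat' {R : ℝ} (hR : 0 < R) {c d : ℝ} (n : ℕ) (h : d = c + n) :
    R ^ d = R ^ c * R ^ n := by
  rw [h, Real.rpow_add hR, Real.rpow_natCast]

/-! ### Uniqueness on the subsonic branch -/

lemma branch_strict_anti {γ a b : ℝ} (hγ : 1 < γ) (ha : 0 < a)
    {ρ₁ ρ₂ : ℝ} (h₁ : 0 < ρ₁) (h₂ : 0 < ρ₂)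
    (hb₁ : 2 * b / ((γ + 1) * a) < ρ₁ ^ (γ - 1))
    (hb₂ : 2 * b / ((γ + 1) * a) < ρ₂ ^ (γ - 1))
    (he : b * ρ₁ ^ 2 - a * ρ₁ ^ (γ + 1) = b * ρ₂ ^ 2 - a * ρ₂ ^ (γ + 1)) :
    ρ₁ = ρ₂ := by
  have main : ∀ ⦃σ₁ σ₂ : ℝ⦄, 0 < σ₁ → σ₁ < σ₂ →
      2 * b / ((γ + 1) * a) < σ₁ ^ (γ - 1) →
      b * σ₂ ^ 2 - a * σ₂ ^ (γ + 1) < b * σ₁ ^ 2 - a * σ₁ ^ (γ + 1) := by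
    intro σ₁ σ₂ hσ₁ hlt hbr
    have hanti : StrictAntiOn (fun ρ : ℝ => b * ρ ^ 2 - a * ρ ^ (γ + 1)) (Set.Icc σ₁ σ₂) := by
      apply strictAntiOn_of_deriv_neg (convex_Icc _ _)
      · apply ContinuousOn.sub (by fun_prop)
        apply ContinuousOn.mul continuousOn_const
        apply ContinuousOn.rpow_const continuousOn_id
        intro z hz
        have : (0:ℝ) < z := lt_of_lt_of_le hσ₁ hz.1
        exact Or.inl this.ne'
      · intro z hz
        rw [interior_Icc] at hz
        have hz0 : 0 < z := lt_trans hσ₁ hz.1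
        have hd : HasDerivAt (fun ρ : ℝ => b * ρ ^ 2 - a * ρ ^ (γ + 1))
            (b * (2 * z) - a * ((γ + 1) * z ^ (γ + 1 - 1))) z := by
          have h1 : HasDerivAt (fun ρ : ℝ => ρ ^ 2) (2 * z) z := by
            simpa using hasDerivAt_pow 2 z
          exact ((h1.const_mul b)).sub
            ((Real.hasDerivAt_rpow_const (Or.inl hz0.ne')).const_mul a)
        rw [hd.deriv]
        have hzb : 2 * b / ((γ + 1) * a) < z ^ (γ - 1) :=
          lt_of_lt_of_le hbr (Real.rpow_le_rpow hσ₁.le hz.1.le (by linarith))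
        have h2b : 2 * b < (γ + 1) * a * z ^ (γ - 1) := by
          rw [div_lt_iff₀ (by positivity)] at hzb; linarith [hzb]
        have hzg : z ^ (γ + 1 - 1) = z ^ (γ - 1) * z := by
          rw [show γ + 1 - 1 = (γ - 1) + 1 by ring, Real.rpow_add hz0, Real.rpow_one]
        rw [hzg]; nlinarith [hz0, h2b]
    have := hanti (Set.left_mem_Icc.2 hlt.le) (Set.right_mem_Icc.2 hlt.le) hlt
    simpa using this
  rcases lt_trichotomy ρ₁ ρ₂ with h | h | h
  · have := main h₁ h hb₁; linarith
  · exact h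
  · have := main h₂ h hb₂; linarith

/-! ### `C¹` smoothness of the subsonic density via the inverse function theorem -/

set_option maxHeartbeats 1000000 in
theorem rho_contDiffAt (γ : ℝ) (hγ : 1 < γ) (A B : ℝ → ℝ)
    (hA : ContDiff ℝ 1 A) (hB : ContDiff ℝ 1 B)
    (hApos : ∀ s, 0 < A s) (hBpos : ∀ s, 0 < B s)
    (Ω : Set E2) (hΩ : IsOpen Ω) (ψ : E2 → ℝ) (hψ : ContDiffOn ℝ 2 ψ Ω)
    (ρf : E2 → ℝ) (hρf : ∀ y ∈ Ω, BernoulliBranch γ A B ψ (ρf y) y)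
    (x : E2) (hx : x ∈ Ω) : ContDiffAt ℝ 1 ρf x := by
  have hΩx : Ω ∈ 𝓝 x := hΩ.mem_nhds hx
  have hψx : ContDiffAt ℝ 2 ψ x := hψ.contDiffAt hΩx
  obtain ⟨hR, hbr, hBern⟩ := hρf x hx
  set R : ℝ := ρf x with hRdef
  set G : E2 × ℝ → ℝ := fun p => B (ψ p.1) * p.2 ^ 2 - A (ψ p.1) * p.2 ^ (γ + 1) -
    (pd 0 ψ p.1 ^ 2 + pd 1 ψ p.1 ^ 2) / 2 with hGdef
  have hfst : ContDiffAt ℝ 1 (Prod.fst : E2 × ℝ → E2) (x, R) := contDiffAt_fst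
  have hψf : ContDiffAt ℝ 1 (fun p : E2 × ℝ => ψ p.1) (x, R) :=
    (hψx.of_le one_le_two).comp (x, R) hfst
  have hGc : ContDiffAt ℝ 1 G (x, R) := by
    apply ContDiffAt.sub
    apply ContDiffAt.sub
    · exact ((hB.contDiffAt).comp _ hψf).mul (contDiffAt_snd.pow 2)
    · exact ((hA.contDiffAt).comp _ hψf).mul
        (((Real.contDiffAt_rpow_const_of_ne (p := γ + 1) hR.ne')).comp (x, R) contDiffAt_snd)
    · exact (((pd_contDiffAt hψx).comp (x, R) hfst).pow 2 |>.add
        (((pd_contDiffAt hψx).comp (x, R) hfst).pow 2)).div_const 2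
  have hGd : DifferentiableAt ℝ G (x, R) := hGc.differentiableAt one_ne_zero
  set L : E2 × ℝ →L[ℝ] ℝ := fderiv ℝ G (x, R) with hLdef
  set c : ℝ := L (0, 1) with hcdef
  have hpart : HasDerivAt (fun τ => G (x, τ)) c R := by
    have h2 : HasDerivAt (fun τ : ℝ => ((x, τ) : E2 × ℝ)) (0, 1) R :=
      (hasDerivAt_const R x).prodMk (hasDerivAt_id R)
    exact hGd.hasFDerivAt.comp_hasDerivAt R h2
  have hdirect : HasDerivAt (fun τ => G (x, τ))
      (B (ψ x) * (2 * R) - A (ψ x) * ((γ + 1) * R ^ (γ + 1 - 1))) R := by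
    have h1 : HasDerivAt (fun τ : ℝ => τ ^ 2) (2 * R) R := by simpa using hasDerivAt_pow 2 R
    have h2 : HasDerivAt (fun τ : ℝ => τ ^ (γ + 1)) ((γ + 1) * R ^ (γ + 1 - 1)) R :=
      Real.hasDerivAt_rpow_const (Or.inl hR.ne')
    simpa [hGdef] using ((h1.const_mul (B (ψ x))).sub (h2.const_mul (A (ψ x)))).sub_const
      ((pd 0 ψ x ^ 2 + pd 1 ψ x ^ 2) / 2)
  have hceq : c = B (ψ x) * (2 * R) - A (ψ x) * ((γ + 1) * R ^ (γ + 1 - 1)) :=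
    hpart.unique hdirect
  have hw : R ^ (γ + 1 - 1) = R ^ (γ - 1) * R := by
    rw [show γ + 1 - 1 = (γ - 1) + 1 by ring, Real.rpow_add hR, Real.rpow_one]
  have hcneg : c < 0 := by
    rw [hceq, hw]
    have hga : 0 < (γ + 1) * A (ψ x) := by have := hApos (ψ x); nlinarith
    rw [div_lt_iff₀ hga] at hbr
    nlinarith [hR]
  have hcne : c ≠ 0 := hcneg.ne
  set Lx : E2 →L[ℝ] ℝ := L.comp (ContinuousLinearMap.inl ℝ E2 ℝ) with hLxdef
  have hL : ∀ p : E2 × ℝ, L p = Lx p.1 + p.2 * c := by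
    intro p
    have hp : (p : E2 × ℝ) = (p.1, 0) + p.2 • ((0, 1) : E2 × ℝ) := by
      ext <;> simp
    rw [hp, map_add, map_smul]
    simp [hLxdef, smul_eq_mul, mul_comm, hcdef]
  set Einv : E2 × ℝ →L[ℝ] E2 × ℝ := (ContinuousLinearMap.fst ℝ E2 ℝ).prod
    (c⁻¹ • (ContinuousLinearMap.snd ℝ E2 ℝ - Lx.comp (ContinuousLinearMap.fst ℝ E2 ℝ)))
    with hEinvdef
  set Efwd : E2 × ℝ →L[ℝ] E2 × ℝ := (ContinuousLinearMap.fst ℝ E2 ℝ).prod L with hEfwddef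
  have hfwd : ∀ p : E2 × ℝ, Efwd p = (p.1, L p) := fun p => rfl
  have hinv : ∀ p : E2 × ℝ, Einv p = (p.1, c⁻¹ * (p.2 - Lx p.1)) := fun p => rfl
  set CLE : (E2 × ℝ) ≃L[ℝ] (E2 × ℝ) := ContinuousLinearEquiv.equivOfInverse Efwd Einv
    (by intro p; rw [hfwd, hinv]; ext
        · rfl
        · simp only [hL p]; field_simp; ring)
    (by intro p; rw [hinv, hfwd]; ext
        · rfl
        · rw [hL (p.1, c⁻¹ * (p.2 - Lx p.1))]; field_simp; ring)
    with hCLEdef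
  set Φ : E2 × ℝ → E2 × ℝ := fun p => (p.1, G p) with hΦdef
  have hΦc : ContDiffAt ℝ 1 Φ (x, R) := contDiffAt_fst.prodMk hGc
  have hΦ' : HasFDerivAt Φ (CLE : (E2 × ℝ) →L[ℝ] (E2 × ℝ)) (x, R) := by
    have : HasFDerivAt Φ Efwd (x, R) := (hasFDerivAt_fst).prodMk hGd.hasFDerivAt
    convert this using 1
    rfl
  have hstrict : HasStrictFDerivAt Φ (CLE : (E2 × ℝ) →L[ℝ] (E2 × ℝ)) (x, R) :=
    hΦc.hasStrictFDerivAt' hΦ' one_ne_zero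
  set inv : E2 × ℝ → E2 × ℝ := hstrict.localInverse Φ CLE (x, R) with hinvdef
  have hG0 : G (x, R) = 0 := by
    simp only [hGdef]
    rw [← hBern]; ring
  have hΦxR : Φ (x, R) = (x, 0) := by rw [hΦdef]; simp [hG0]
  have hinvcd : ContDiffAt ℝ 1 inv (x, 0) := by
    have h := hΦc.to_localInverse (f' := CLE) hΦ' one_ne_zero
    rw [hΦxR] at h
    exact h
  set rloc : E2 → ℝ := fun y => (inv (y, 0)).2 with hrlocdef
  have hrloc_cd : ContDiffAt ℝ 1 rloc x :=
    contDiffAt_snd.comp x (hinvcd.comp x (contDiffAt_id.prodMk contDiffAt_const))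
  have hinvx : inv (x, 0) = (x, R) := by
    rw [← hΦxR]
    exact hstrict.localInverse_apply_image
  have hrloc_x : rloc x = R := by rw [hrlocdef]; simp [hinvx]
  have hright : ∀ᶠ y in 𝓝 x, Φ (inv (y, 0)) = (y, 0) := by
    have h1 := hstrict.eventually_right_inverse
    rw [hΦxR] at h1
    have h2 : Tendsto (fun y : E2 => ((y, 0) : E2 × ℝ)) (𝓝 x) (𝓝 ((x, 0) : E2 × ℝ)) :=
      (continuous_id.prodMk continuous_const).continuousAt
    exact h2.eventually h1
  have hGloc : ∀ᶠ y in 𝓝 x, G (y, rloc y) = 0 := by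
    filter_upwards [hright] with y hy
    have h1 : (inv (y, 0)).1 = y := congrArg Prod.fst hy
    have h2 : G (inv (y, 0)) = 0 := congrArg Prod.snd hy
    have h3 : inv (y, 0) = (y, rloc y) := by
      rw [hrlocdef]; exact Prod.ext h1 rfl
    rw [h3] at h2; exact h2
  have hrloc_cont : ContinuousAt rloc x := hrloc_cd.continuousAt
  have hev1 : ∀ᶠ y in 𝓝 x, 0 < rloc y :=
    hrloc_cont.eventually (eventually_gt_nhds (by rw [hrloc_x]; exact hR) : _) |>.mono
      (fun y hy => hy)
  have hev2 : ∀ᶠ y in 𝓝 x, 2 * B (ψ y) / ((γ + 1) * A (ψ y)) < rloc y ^ (γ - 1) := by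
    set φ : E2 → ℝ := fun y => rloc y ^ (γ - 1) - 2 * B (ψ y) / ((γ + 1) * A (ψ y)) with hφdef
    have hψc : ContinuousAt ψ x := hψx.continuousAt
    have hφc : ContinuousAt φ x := by
      apply ContinuousAt.sub
      · exact hrloc_cont.rpow_const (Or.inl (by rw [hrloc_x]; exact hR.ne'))
      · apply ContinuousAt.div
        · exact (hB.continuous.continuousAt.comp hψc).const_mul 2
        · exact (continuousAt_const.mul (hA.continuous.continuousAt.comp hψc))
        · have := hApos (ψ x); positivity
    have hφx : 0 < φ x := by
      rw [hφdef]; simp only [hrloc_x]; linarith [hbr]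
    have := hφc.eventually (eventually_gt_nhds hφx)
    filter_upwards [this] with y hy
    rw [hφdef] at hy; linarith [hy]
  have hEq : ρf =ᶠ[𝓝 x] rloc := by
    filter_upwards [hΩx, hGloc, hev1, hev2] with y hyΩ hGy hpos hbr2
    obtain ⟨h1, h2, h3⟩ := hρf y hyΩ
    have hq : B (ψ y) * rloc y ^ 2 - A (ψ y) * rloc y ^ (γ + 1) =
        (pd 0 ψ y ^ 2 + pd 1 ψ y ^ 2) / 2 := by
      simp only [hGdef] at hGy; linarith
    exact branch_strict_anti hγ (hApos (ψ y)) h1 hpos h2 hbr2 (h3.symm.trans hq.symm)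
  exact hrloc_cd.congr_of_eventuallyEq hEq

set_option maxHeartbeats 2000000 in
/-- Section 6 of the paper. A `C²` solution `ψ` of the reduced
equation `a_{ij}(ψ,∇ψ)ψ_{x_ix_j} = F(ψ,∇ψ)` gives rise, via
`m = (ψ_{x₂}, -ψ_{x₁})`, the subsonic-branch density `ρ`, and
`p = ((γ-1)/γ)A(ψ)ρ^γ`, to a solution of the steady full Euler equations which is
subsonic everywhere. -/
theorem reduced_equation_gives_euler_solution
    (γ : ℝ) (hγ : 1 < γ) (A B : ℝ → ℝ)
    (hA : ContDiff ℝ 1 A) (hB : ContDiff ℝ 1 B)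
    (hApos : ∀ s, 0 < A s) (hBpos : ∀ s, 0 < B s)
    (Ω : Set E2) (hΩ : IsOpen Ω) (ψ : E2 → ℝ) (hψ : ContDiffOn ℝ 2 ψ Ω)
    (hsol : ReducedEq γ A B Ω ψ) :
    ∃ ρf : E2 → ℝ,
      (∀ x ∈ Ω, BernoulliBranch γ A B ψ (ρf x) x) ∧
      ContDiffOn ℝ 1 ρf Ω ∧
      EulerEqs γ Ω (fun y => pd 1 ψ y) (fun y => -pd 0 ψ y)
        (fun y => ((γ - 1) / γ) * A (ψ y) * ρf y ^ γ) ρf ∧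
      ∀ x ∈ Ω,
        (pd 1 ψ x / ρf x) ^ 2 + (-pd 0 ψ x / ρf x) ^ 2 <
          γ * (((γ - 1) / γ) * A (ψ x) * ρf x ^ γ) / ρf x := by
  classical
  set ρf : E2 → ℝ := fun y => if h : y ∈ Ω then (hsol y h).choose else 1 with hρfdef
  have hbranch : ∀ y ∈ Ω, BernoulliBranch γ A B ψ (ρf y) y := by
    intro y hy
    simp only [hρfdef, dif_pos hy]
    exact (hsol y hy).choose_spec.1
  have hnondiv : ∀ y ∈ Ω, NonDivEq γ A B ψ (ρf y) y := by
    intro y hy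
    simp only [hρfdef, dif_pos hy]
    exact (hsol y hy).choose_spec.2
  have hCD : ∀ x ∈ Ω, ContDiffAt ℝ 1 ρf x := fun x hx =>
    rho_contDiffAt γ hγ A B hA hB hApos hBpos Ω hΩ ψ hψ ρf hbranch x hx
  refine ⟨ρf, hbranch, fun x hx => (hCD x hx).contDiffWithinAt, ?_, ?_⟩
  · -- the Euler equations
    intro x hx
    have hΩx : Ω ∈ 𝓝 x := hΩ.mem_nhds hx
    have hψx : ContDiffAt ℝ 2 ψ x := hψ.contDiffAt hΩx
    obtain ⟨hR, hbr, hBern⟩ := hbranch x hx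
    have hnd : ((γ - 1) * A (ψ x) * ρf x ^ (γ + 1) - pd 1 ψ x ^ 2) * pd 0 (pd 0 ψ) x +
        pd 0 ψ x * pd 1 ψ x * (pd 0 (pd 1 ψ) x + pd 1 (pd 0 ψ) x) +
        ((γ - 1) * A (ψ x) * ρf x ^ (γ + 1) - pd 0 ψ x ^ 2) * pd 1 (pd 1 ψ) x =
        ((γ - 1) / γ) * ρf x ^ (γ + 3) *
        (γ * A (ψ x) * deriv B (ψ x) - 2 * deriv A (ψ x) * B (ψ x) +
          A (ψ x) * deriv A (ψ x) * ρf x ^ (γ - 1)) := hnondiv x hx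
    have hγ0 : γ ≠ 0 := by linarith
    have hγ1 : γ - 1 ≠ 0 := by intro h; linarith [h]
    have ha := hApos (ψ x)
    have hRne : ρf x ≠ 0 := hR.ne'
    have hud : DifferentiableAt ℝ (pd 0 ψ) x := (pd_contDiffAt hψx).differentiableAt one_ne_zero
    have hvd : DifferentiableAt ℝ (pd 1 ψ) x := (pd_contDiffAt hψx).differentiableAt one_ne_zero
    have hρd : DifferentiableAt ℝ ρf x := (hCD x hx).differentiableAt one_ne_zero
    have hψd : DifferentiableAt ℝ ψ x := (hψx.of_le one_le_two).differentiableAt one_ne_zero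
    have hAd : DifferentiableAt ℝ A (ψ x) := (hA.differentiable one_ne_zero).differentiableAt
    have hBd : DifferentiableAt ℝ B (ψ x) := (hB.differentiable one_ne_zero).differentiableAt
    have hAψd : DifferentiableAt ℝ (fun y => A (ψ y)) x := hAd.comp x hψd
    have hBψd : DifferentiableAt ℝ (fun y => B (ψ y)) x := hBd.comp x hψd
    have hsymm : pd 1 (pd 0 ψ) x = pd 0 (pd 1 ψ) x := (pd_symm hψx).symm
    have hw1 : ρf x ^ γ = ρf x ^ (γ - 1) * ρf x := by
      simpa using rpow_add_nat' hR 1 (by push_cast; ring)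
    have hw2 : ρf x ^ (γ + 1) = ρf x ^ (γ - 1) * ρf x ^ 2 :=
      rpow_add_nat' hR 2 (by push_cast; ring)
    have hw3 : ρf x ^ (γ + 3) = ρf x ^ (γ - 1) * ρf x ^ 4 :=
      rpow_add_nat' hR 4 (by push_cast; ring)
    have hg : ρf x ^ (γ + 1 - 1) = ρf x ^ (γ - 1) * ρf x := by
      simpa using rpow_add_nat' hR 1 (by push_cast; ring)
    have hρ2d : DifferentiableAt ℝ (fun y => ρf y ^ 2) x := hρd.pow 2
    have hρg1d : DifferentiableAt ℝ (fun y => ρf y ^ (γ + 1)) x :=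
      hρd.rpow_const (Or.inl hRne)
    have hρgd : DifferentiableAt ℝ (fun y => ρf y ^ γ) x := hρd.rpow_const (Or.inl hRne)
    have hf1d : DifferentiableAt ℝ (fun y => B (ψ y) * ρf y ^ 2) x := hBψd.mul hρ2d
    have hf2d : DifferentiableAt ℝ (fun y => A (ψ y) * ρf y ^ (γ + 1)) x := hAψd.mul hρg1d
    have hq1d : DifferentiableAt ℝ (fun y => pd 0 ψ y ^ 2) x := hud.pow 2
    have hq2d : DifferentiableAt ℝ (fun y => pd 1 ψ y ^ 2) x := hvd.pow 2
    have hf3d : DifferentiableAt ℝ (fun y => (pd 0 ψ y ^ 2 + pd 1 ψ y ^ 2) / 2) x :=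
      by simpa [div_eq_inv_mul] using (hq1d.add hq2d).const_mul ((2:ℝ)⁻¹)
    have hΦev : (fun y => B (ψ y) * ρf y ^ 2 - A (ψ y) * ρf y ^ (γ + 1) -
        (pd 0 ψ y ^ 2 + pd 1 ψ y ^ 2) / 2) =ᶠ[𝓝 x] (fun _ => (0:ℝ)) := by
      filter_upwards [hΩx] with y hy
      obtain ⟨_, _, h3⟩ := hbranch y hy
      show B (ψ y) * ρf y ^ 2 - A (ψ y) * ρf y ^ (γ + 1) -
        (pd 0 ψ y ^ 2 + pd 1 ψ y ^ 2) / 2 = 0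
      linarith
    have hDB : ∀ i : Fin 2,
        deriv B (ψ x) * pd i ψ x * ρf x ^ 2 + B (ψ x) * (2 * ρf x * pd i ρf x) -
        (deriv A (ψ x) * pd i ψ x * ρf x ^ (γ + 1) +
          A (ψ x) * ((γ + 1) * ρf x ^ (γ + 1 - 1) * pd i ρf x)) -
        (2 * pd 0 ψ x * pd i (pd 0 ψ) x + 2 * pd 1 ψ x * pd i (pd 1 ψ) x) / 2 = 0 := by
      intro i
      have h0 : pd i (fun y => B (ψ y) * ρf y ^ 2 - A (ψ y) * ρf y ^ (γ + 1) -
          (pd 0 ψ y ^ 2 + pd 1 ψ y ^ 2) / 2) x = 0 := by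
        rw [pd_congr_nhds hΦev, pd_const]
      rw [pd_sub (hf1d.fun_sub hf2d) hf3d, pd_sub hf1d hf2d, pd_mul hBψd hρ2d,
        pd_mul hAψd hρg1d, pd_comp hBd hψd, pd_comp hAd hψd, pd_sq hρd,
        pd_rpow (γ + 1) hρd hR, pd_div_const (hq1d.fun_add hq2d) 2,
        pd_add hq1d hq2d, pd_sq hud, pd_sq hvd] at h0
      linear_combination h0
    have hD1 : (2 * B (ψ x) * ρf x - (γ + 1) * A (ψ x) * (ρf x ^ (γ - 1) * ρf x)) * pd 0 ρf x =
        pd 0 ψ x * pd 0 (pd 0 ψ) x + pd 1 ψ x * pd 0 (pd 1 ψ) x - deriv B (ψ x) * pd 0 ψ x * ρf x ^ 2 +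
          deriv A (ψ x) * pd 0 ψ x * (ρf x ^ (γ - 1) * ρf x ^ 2) := by
      have h := hDB 0
      rw [hw2, hg] at h
      linear_combination h
    have hD2 : (2 * B (ψ x) * ρf x - (γ + 1) * A (ψ x) * (ρf x ^ (γ - 1) * ρf x)) * pd 1 ρf x =
        pd 0 ψ x * pd 0 (pd 1 ψ) x + pd 1 ψ x * pd 1 (pd 1 ψ) x - deriv B (ψ x) * pd 1 ψ x * ρf x ^ 2 +
          deriv A (ψ x) * pd 1 ψ x * (ρf x ^ (γ - 1) * ρf x ^ 2) := by
      have h := hDB 1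
      rw [hw2, hg, hsymm] at h
      linear_combination h
    have hBw : (pd 0 ψ x ^ 2 + pd 1 ψ x ^ 2) / 2 = B (ψ x) * ρf x ^ 2 - A (ψ x) * (ρf x ^ (γ - 1) * ρf x ^ 2) := by
      rw [hw2] at hBern; exact hBern
    have hNg : (((γ - 1) * A (ψ x) * (ρf x ^ (γ - 1) * ρf x ^ 2) - pd 1 ψ x ^ 2) * pd 0 (pd 0 ψ) x +
        pd 0 ψ x * pd 1 ψ x * (pd 0 (pd 1 ψ) x + pd 0 (pd 1 ψ) x) +
        ((γ - 1) * A (ψ x) * (ρf x ^ (γ - 1) * ρf x ^ 2) - pd 0 ψ x ^ 2) * pd 1 (pd 1 ψ) x) * γ =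
        (γ - 1) * (ρf x ^ (γ - 1) * ρf x ^ 4) *
          (γ * A (ψ x) * deriv B (ψ x) - 2 * deriv A (ψ x) * B (ψ x) + A (ψ x) * deriv A (ψ x) * ρf x ^ (γ - 1)) := by
      rw [div_mul_eq_mul_div, div_mul_eq_mul_div, eq_div_iff hγ0, hw2, hw3, hsymm] at hnd
      linear_combination hnd
    have hDne : 2 * B (ψ x) * ρf x - (γ + 1) * A (ψ x) * (ρf x ^ (γ - 1) * ρf x) ≠ 0 := by
      have hbr' : 2 * B (ψ x) < (γ + 1) * A (ψ x) * ρf x ^ (γ - 1) := by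
        rw [div_lt_iff₀ (by positivity)] at hbr; linarith
      have h : 2 * B (ψ x) * ρf x - (γ + 1) * A (ψ x) * (ρf x ^ (γ - 1) * ρf x) < 0 := by nlinarith [hR]
      exact h.ne
    have hmd : DifferentiableAt ℝ (fun y => pd 1 ψ y * -pd 0 ψ y) x := hvd.mul hud.neg
    have hcAd : DifferentiableAt ℝ (fun y => (γ - 1) / γ * A (ψ y)) x := hAψd.const_mul _
    have hT1 : pd 0 (fun y => pd 1 ψ y ^ 2 / ρf y) x =
        (2 * pd 1 ψ x * pd 0 (pd 1 ψ) x * ρf x - pd 1 ψ x ^ 2 * pd 0 ρf x) / ρf x ^ 2 := by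
      rw [pd_div hq2d hρd hRne, pd_sq hvd]
    have hT2 : pd 1 (fun y => pd 1 ψ y * -pd 0 ψ y / ρf y) x =
        ((-(pd 0 ψ x * pd 1 (pd 1 ψ) x) - pd 1 ψ x * pd 0 (pd 1 ψ) x) * ρf x + pd 0 ψ x * pd 1 ψ x * pd 1 ρf x) / ρf x ^ 2 := by
      rw [pd_div hmd hρd hRne, pd_mul hvd hud.fun_neg, pd_neg, hsymm]
      ring
    have hT3 : pd 0 (fun y => (γ - 1) / γ * A (ψ y) * ρf y ^ γ) x =
        (γ - 1) / γ * (deriv A (ψ x) * pd 0 ψ x * (ρf x ^ (γ - 1) * ρf x) + A (ψ x) * (γ * ρf x ^ (γ - 1) * pd 0 ρf x)) := by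
      rw [pd_mul hcAd hρgd, pd_const_mul _ hAψd, pd_comp hAd hψd, pd_rpow γ hρd hR, hw1]
      ring
    have hT4 : pd 0 (fun y => pd 1 ψ y * -pd 0 ψ y / ρf y) x =
        ((-(pd 0 ψ x * pd 0 (pd 1 ψ) x) - pd 1 ψ x * pd 0 (pd 0 ψ) x) * ρf x + pd 0 ψ x * pd 1 ψ x * pd 0 ρf x) / ρf x ^ 2 := by
      rw [pd_div hmd hρd hRne, pd_mul hvd hud.fun_neg, pd_neg]
      ring
    have hnd2 : DifferentiableAt ℝ (fun y => (-pd 0 ψ y) ^ 2) x := hud.neg.pow 2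
    have hT5 : pd 1 (fun y => (-pd 0 ψ y) ^ 2 / ρf y) x =
        (2 * pd 0 ψ x * pd 0 (pd 1 ψ) x * ρf x - pd 0 ψ x ^ 2 * pd 1 ρf x) / ρf x ^ 2 := by
      rw [pd_div hnd2 hρd hRne, pd_sq hud.fun_neg, pd_neg, hsymm]
      ring
    have hT6 : pd 1 (fun y => (γ - 1) / γ * A (ψ y) * ρf y ^ γ) x =
        (γ - 1) / γ * (deriv A (ψ x) * pd 1 ψ x * (ρf x ^ (γ - 1) * ρf x) + A (ψ x) * (γ * ρf x ^ (γ - 1) * pd 1 ρf x)) := by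
      rw [pd_mul hcAd hρgd, pd_const_mul _ hAψd, pd_comp hAd hψd, pd_rpow γ hρd hR, hw1]
      ring
    refine ⟨?_, ?_, ?_, ?_⟩
    · show pd 0 (pd 1 ψ) x + pd 1 (fun y => -pd 0 ψ y) x = 0
      rw [pd_neg, hsymm]; ring
    · show pd 0 (fun y => pd 1 ψ y ^ 2 / ρf y) x +
        pd 1 (fun y => pd 1 ψ y * -pd 0 ψ y / ρf y) x +
        pd 0 (fun y => (γ - 1) / γ * A (ψ y) * ρf y ^ γ) x = 0
      rw [hT1, hT2, hT3]
      have key : γ * ((pd 1 ψ x * pd 0 (pd 1 ψ) x - pd 0 ψ x * pd 1 (pd 1 ψ) x) * ρf x +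
          ((γ - 1) * A (ψ x) * (ρf x ^ (γ - 1) * ρf x ^ 2) - pd 1 ψ x ^ 2) * pd 0 ρf x +
          pd 0 ψ x * pd 1 ψ x * pd 1 ρf x) + (γ - 1) * deriv A (ψ x) * pd 0 ψ x * (ρf x ^ (γ - 1) * ρf x ^ 3) = 0 := by
        have h2 : (2 * B (ψ x) * ρf x - (γ + 1) * A (ψ x) * (ρf x ^ (γ - 1) * ρf x)) *
            (γ * ((pd 1 ψ x * pd 0 (pd 1 ψ) x - pd 0 ψ x * pd 1 (pd 1 ψ) x) * ρf x +
              ((γ - 1) * A (ψ x) * (ρf x ^ (γ - 1) * ρf x ^ 2) - pd 1 ψ x ^ 2) * pd 0 ρf x +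
              pd 0 ψ x * pd 1 ψ x * pd 1 ρf x) + (γ - 1) * deriv A (ψ x) * pd 0 ψ x * (ρf x ^ (γ - 1) * ρf x ^ 3)) = 0 := by
          linear_combination pd 0 ψ x * hNg + (2 * γ * (pd 0 ψ x * pd 1 (pd 1 ψ) x - pd 1 ψ x * pd 0 (pd 1 ψ) x)) * hBw +
            (γ * ((γ - 1) * A (ψ x) * (ρf x ^ (γ - 1) * ρf x ^ 2) - pd 1 ψ x ^ 2)) * hD1 +
            (γ * pd 0 ψ x * pd 1 ψ x) * hD2
        rcases mul_eq_zero.mp h2 with h | h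
        · exact absurd h hDne
        · exact h
      have expand : (2 * pd 1 ψ x * pd 0 (pd 1 ψ) x * ρf x - pd 1 ψ x ^ 2 * pd 0 ρf x) / ρf x ^ 2 +
          ((-(pd 0 ψ x * pd 1 (pd 1 ψ) x) - pd 1 ψ x * pd 0 (pd 1 ψ) x) * ρf x + pd 0 ψ x * pd 1 ψ x * pd 1 ρf x) / ρf x ^ 2 +
          (γ - 1) / γ * (deriv A (ψ x) * pd 0 ψ x * (ρf x ^ (γ - 1) * ρf x) + A (ψ x) * (γ * ρf x ^ (γ - 1) * pd 0 ρf x)) =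
          (γ * ((pd 1 ψ x * pd 0 (pd 1 ψ) x - pd 0 ψ x * pd 1 (pd 1 ψ) x) * ρf x +
            ((γ - 1) * A (ψ x) * (ρf x ^ (γ - 1) * ρf x ^ 2) - pd 1 ψ x ^ 2) * pd 0 ρf x +
            pd 0 ψ x * pd 1 ψ x * pd 1 ρf x) + (γ - 1) * deriv A (ψ x) * pd 0 ψ x * (ρf x ^ (γ - 1) * ρf x ^ 3)) /
            (γ * ρf x ^ 2) := by
        field_simp
        ring
      rw [expand, key, zero_div]
    · show pd 0 (fun y => pd 1 ψ y * -pd 0 ψ y / ρf y) x +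
        pd 1 (fun y => (-pd 0 ψ y) ^ 2 / ρf y) x +
        pd 1 (fun y => (γ - 1) / γ * A (ψ y) * ρf y ^ γ) x = 0
      rw [hT4, hT5, hT6]
      have key : γ * ((pd 0 ψ x * pd 0 (pd 1 ψ) x - pd 0 (pd 0 ψ) x * pd 1 ψ x) * ρf x + pd 0 ψ x * pd 1 ψ x * pd 0 ρf x +
          ((γ - 1) * A (ψ x) * (ρf x ^ (γ - 1) * ρf x ^ 2) - pd 0 ψ x ^ 2) * pd 1 ρf x) +
          (γ - 1) * deriv A (ψ x) * pd 1 ψ x * (ρf x ^ (γ - 1) * ρf x ^ 3) = 0 := by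
        have h2 : (2 * B (ψ x) * ρf x - (γ + 1) * A (ψ x) * (ρf x ^ (γ - 1) * ρf x)) *
            (γ * ((pd 0 ψ x * pd 0 (pd 1 ψ) x - pd 0 (pd 0 ψ) x * pd 1 ψ x) * ρf x + pd 0 ψ x * pd 1 ψ x * pd 0 ρf x +
              ((γ - 1) * A (ψ x) * (ρf x ^ (γ - 1) * ρf x ^ 2) - pd 0 ψ x ^ 2) * pd 1 ρf x) +
              (γ - 1) * deriv A (ψ x) * pd 1 ψ x * (ρf x ^ (γ - 1) * ρf x ^ 3)) = 0 := by
          linear_combination pd 1 ψ x * hNg + (2 * γ * (pd 1 ψ x * pd 0 (pd 0 ψ) x - pd 0 ψ x * pd 0 (pd 1 ψ) x)) * hBw +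
            (γ * pd 0 ψ x * pd 1 ψ x) * hD1 +
            (γ * ((γ - 1) * A (ψ x) * (ρf x ^ (γ - 1) * ρf x ^ 2) - pd 0 ψ x ^ 2)) * hD2
        rcases mul_eq_zero.mp h2 with h | h
        · exact absurd h hDne
        · exact h
      have expand : ((-(pd 0 ψ x * pd 0 (pd 1 ψ) x) - pd 1 ψ x * pd 0 (pd 0 ψ) x) * ρf x + pd 0 ψ x * pd 1 ψ x * pd 0 ρf x) / ρf x ^ 2 +
          (2 * pd 0 ψ x * pd 0 (pd 1 ψ) x * ρf x - pd 0 ψ x ^ 2 * pd 1 ρf x) / ρf x ^ 2 +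
          (γ - 1) / γ * (deriv A (ψ x) * pd 1 ψ x * (ρf x ^ (γ - 1) * ρf x) + A (ψ x) * (γ * ρf x ^ (γ - 1) * pd 1 ρf x)) =
          (γ * ((pd 0 ψ x * pd 0 (pd 1 ψ) x - pd 0 (pd 0 ψ) x * pd 1 ψ x) * ρf x + pd 0 ψ x * pd 1 ψ x * pd 0 ρf x +
            ((γ - 1) * A (ψ x) * (ρf x ^ (γ - 1) * ρf x ^ 2) - pd 0 ψ x ^ 2) * pd 1 ρf x) +
            (γ - 1) * deriv A (ψ x) * pd 1 ψ x * (ρf x ^ (γ - 1) * ρf x ^ 3)) / (γ * ρf x ^ 2) := by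
        field_simp
        ring
      rw [expand, key, zero_div]
    · show pd 0 (fun y => pd 1 ψ y *
          ((pd 1 ψ y ^ 2 + (-pd 0 ψ y) ^ 2) / (2 * ρf y ^ 2) +
            (γ - 1) / γ * A (ψ y) * ρf y ^ γ / ((γ - 1) * ρf y) +
            (γ - 1) / γ * A (ψ y) * ρf y ^ γ / ρf y)) x +
        pd 1 (fun y => -pd 0 ψ y *
          ((pd 1 ψ y ^ 2 + (-pd 0 ψ y) ^ 2) / (2 * ρf y ^ 2) +
            (γ - 1) / γ * A (ψ y) * ρf y ^ γ / ((γ - 1) * ρf y) +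
            (γ - 1) / γ * A (ψ y) * ρf y ^ γ / ρf y)) x = 0
      have hEB : ∀ y ∈ Ω, (pd 1 ψ y ^ 2 + (-pd 0 ψ y) ^ 2) / (2 * ρf y ^ 2) +
          (γ - 1) / γ * A (ψ y) * ρf y ^ γ / ((γ - 1) * ρf y) +
          (γ - 1) / γ * A (ψ y) * ρf y ^ γ / ρf y = B (ψ y) := by
        intro y hy
        obtain ⟨hRy, _, h3⟩ := hbranch y hy
        have hw1y : ρf y ^ γ = ρf y ^ (γ - 1) * ρf y := by
          simpa using rpow_add_nat' hRy 1 (by push_cast; ring)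
        have hw2y : ρf y ^ (γ + 1) = ρf y ^ (γ - 1) * ρf y ^ 2 :=
          rpow_add_nat' hRy 2 (by push_cast; ring)
        rw [hw2y] at h3
        rw [hw1y]
        field_simp
        linear_combination (2 * γ) * h3
      have hE1 : pd 0 (fun y => pd 1 ψ y *
          ((pd 1 ψ y ^ 2 + (-pd 0 ψ y) ^ 2) / (2 * ρf y ^ 2) +
            (γ - 1) / γ * A (ψ y) * ρf y ^ γ / ((γ - 1) * ρf y) +
            (γ - 1) / γ * A (ψ y) * ρf y ^ γ / ρf y)) x =
          pd 0 (fun y => pd 1 ψ y * B (ψ y)) x := by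
        apply pd_congr_nhds
        filter_upwards [hΩx] with y hy
        rw [hEB y hy]
      have hE2 : pd 1 (fun y => -pd 0 ψ y *
          ((pd 1 ψ y ^ 2 + (-pd 0 ψ y) ^ 2) / (2 * ρf y ^ 2) +
            (γ - 1) / γ * A (ψ y) * ρf y ^ γ / ((γ - 1) * ρf y) +
            (γ - 1) / γ * A (ψ y) * ρf y ^ γ / ρf y)) x =
          pd 1 (fun y => -pd 0 ψ y * B (ψ y)) x := by
        apply pd_congr_nhds
        filter_upwards [hΩx] with y hy
        rw [hEB y hy]
      rw [hE1, hE2, pd_mul hvd hBψd, pd_mul hud.fun_neg hBψd, pd_comp hBd hψd,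
        pd_comp hBd hψd, pd_neg, hsymm]
      ring
  · -- subsonic
    intro x hx
    obtain ⟨hR, hbr, hBern⟩ := hbranch x hx
    have ha := hApos (ψ x)
    have hw2 : ρf x ^ (γ + 1) = ρf x ^ (γ - 1) * ρf x ^ 2 :=
      rpow_add_nat' hR 2 (by push_cast; ring)
    have hw1 : ρf x ^ γ = ρf x ^ (γ - 1) * ρf x := by
      simpa using rpow_add_nat' hR 1 (by push_cast; ring)
    have hbr' : 2 * B (ψ x) < (γ + 1) * A (ψ x) * ρf x ^ (γ - 1) := by
      rw [div_lt_iff₀ (by positivity)] at hbr; linarith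
    rw [hw2] at hBern
    have hR2 : (0:ℝ) < ρf x ^ 2 := by positivity
    calc (pd 1 ψ x / ρf x) ^ 2 + (-pd 0 ψ x / ρf x) ^ 2
        = (pd 1 ψ x ^ 2 + pd 0 ψ x ^ 2) / ρf x ^ 2 := by
          rw [div_pow, div_pow]; ring
      _ < (γ - 1) * A (ψ x) * ρf x ^ (γ - 1) := by
          rw [div_lt_iff₀ hR2]
          nlinarith [hBern, mul_lt_mul_of_pos_right hbr' hR2]
      _ = γ * ((γ - 1) / γ * A (ψ x) * ρf x ^ γ) / ρf x := by
          rw [hw1]; field_simp
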